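/- arXiv:2502.00248 — 5 statements merged into one kernel-verified Lean document; each statement's English description precedes it below -/
import Mathlib

section
/- Let x, x̄ ∈ ℝⁿ, u ∈ ℝᵖ, f : ℝⁿ → ℝⁿ, g : ℝⁿ → ℝ^{n×p}, A ∈ ℝ^{n×n}, δ ≥ 0 and θ > 0, and set x⁺ := f(x) + g(x)u. Let P₁, P₂ ∈ ℝ^{n×n} be symmetric positive definite. Assume: (i) ‖f(x) − A x‖ ≤ δ; (ii) the stability constraint ‖A x + g(x)u − x̄‖_{P₁} − ‖x − x̄‖_{P₁} ≤ −θ‖x − x̄‖; and (iii) the one-step optimality consequence ‖x⁺ − x̄‖_{P₂} ≤ ‖x⁺ − x̄‖_{P₁}. Then the Lyapunov decrement satisfies ‖x⁺ − x̄‖_{P₂} − ‖x − x̄‖_{P₁} ≤ 2√(λ_max(P₂))·δ + √(λ_max(P₁))·δ − θ‖x − x̄‖. (Per-step decrement inequality of Theorem 2.) -/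
open Matrix

/-- Euclidean norm on `ℝⁿ`: `‖z‖ = √(zᵀ z)`. -/
noncomputable def enorm {n : ℕ} (z : Fin n → ℝ) : ℝ :=
  Real.sqrt (z ⬝ᵥ z)

/-- Weighted norm `‖z‖_Q = √(zᵀ Q z)` for a positive definite matrix `Q`. -/
noncomputable def wnorm {n : ℕ} (Q : Matrix (Fin n) (Fin n) ℝ) (z : Fin n → ℝ) : ℝ :=
  Real.sqrt (z ⬝ᵥ Q.mulVec z)

lemma enorm_eq_norm {n : ℕ} (v : Fin n → ℝ) :
    _root_.enorm v = ‖(WithLp.equiv 2 (Fin n → ℝ)).symm v‖ := by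
  rw [EuclideanSpace.norm_eq, _root_.enorm]
  congr 1
  simp [dotProduct, Real.norm_eq_abs, sq, abs_mul_abs_self]

lemma enorm_add_le_fin {n : ℕ} (v w : Fin n → ℝ) : _root_.enorm (v + w) ≤ _root_.enorm v + _root_.enorm w := by
  rw [enorm_eq_norm, enorm_eq_norm, enorm_eq_norm]
  exact norm_add_le _ _

open scoped MatrixOrder in
lemma dot_sqrt {n : ℕ} {Q : Matrix (Fin n) (Fin n) ℝ} (hQ : Q.PosSemidef) (z : Fin n → ℝ) :
    z ⬝ᵥ Q.mulVec z = ((CFC.sqrt Q).mulVec z) ⬝ᵥ ((CFC.sqrt Q).mulVec z) := by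
  set S := CFC.sqrt Q with hSdef
  have hS : Sᵀ = S := by
    have := (CFC.sqrt_nonneg Q).posSemidef.1
    rwa [Matrix.IsHermitian, conjTranspose_eq_transpose_of_trivial] at this
  calc z ⬝ᵥ Q.mulVec z = z ⬝ᵥ (S * S).mulVec z := by rw [CFC.sqrt_mul_sqrt_self Q hQ.nonneg]
    _ = z ⬝ᵥ S.mulVec (S.mulVec z) := by rw [← mulVec_mulVec]
    _ = (S.vecMul z) ⬝ᵥ (S.mulVec z) := by rw [dotProduct_mulVec]
    _ = (S.mulVec z) ⬝ᵥ (S.mulVec z) := by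
        nth_rewrite 1 [← hS]
        rw [vecMul_transpose]

open scoped MatrixOrder in
lemma wnorm_triangle {n : ℕ} {Q : Matrix (Fin n) (Fin n) ℝ} (hQ : Q.PosSemidef) (a b : Fin n → ℝ) :
    wnorm Q (a + b) ≤ wnorm Q a + wnorm Q b := by
  have h : ∀ z, wnorm Q z = _root_.enorm ((CFC.sqrt Q).mulVec z) := fun z => by
    rw [wnorm, dot_sqrt hQ]; rfl
  rw [h, h, h, mulVec_add]
  exact enorm_add_le_fin _ _

lemma dot_le_lammax {n : ℕ} {Q : Matrix (Fin n) (Fin n) ℝ} (hQ : Q.IsHermitian) (z : Fin n → ℝ) :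
    z ⬝ᵥ Q.mulVec z ≤ (⨆ i, hQ.eigenvalues i) * (z ⬝ᵥ z) := by
  set U : Matrix (Fin n) (Fin n) ℝ := (hQ.eigenvectorUnitary : Matrix (Fin n) (Fin n) ℝ) with hU
  set c : Fin n → ℝ := Uᵀ.mulVec z with hc
  have hcU : U.vecMul z = c := by rw [hc, ← vecMul_transpose]; rfl
  have hstarU : star U = Uᵀ := by
    rw [Matrix.star_eq_conjTranspose, conjTranspose_eq_transpose_of_trivial]
  have hQz : z ⬝ᵥ Q.mulVec z = ∑ i, hQ.eigenvalues i * (c i * c i) := by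
    conv_lhs => rw [hQ.spectral_theorem, Unitary.conjStarAlgAut_apply]
    rw [← mulVec_mulVec, ← mulVec_mulVec, dotProduct_mulVec, hcU, hstarU, ← hc]
    simp [dotProduct, diagonal_mulVec_single, mulVec, Matrix.diagonal_apply, Finset.mul_sum, mul_comm, mul_left_comm]
  have hzz : z ⬝ᵥ z = ∑ i, c i * c i := by
    have hUU : U * Uᵀ = 1 := by
      rw [← hstarU]
      exact Matrix.mem_unitaryGroup_iff.mp hQ.eigenvectorUnitary.2
    have : (∑ i, c i * c i) = c ⬝ᵥ (Uᵀ.mulVec z) := rfl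
    rw [this, dotProduct_mulVec, vecMul_transpose, hc, mulVec_mulVec, hUU, one_mulVec]
  rw [hQz, hzz, Finset.mul_sum]
  apply Finset.sum_le_sum
  intro i _
  exact mul_le_mul_of_nonneg_right
    (le_ciSup (Set.finite_range hQ.eigenvalues).bddAbove i) (mul_self_nonneg _)

lemma wnorm_le_sqrt_lammax {n : ℕ} {Q : Matrix (Fin n) (Fin n) ℝ} (hQ : Q.PosDef)
    (z : Fin n → ℝ) : wnorm Q z ≤ Real.sqrt (⨆ i, hQ.1.eigenvalues i) * _root_.enorm z := by
  have h0 : 0 ≤ ⨆ i, hQ.1.eigenvalues i :=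
    Real.iSup_nonneg fun i => (hQ.eigenvalues_pos i).le
  rw [wnorm, _root_.enorm, ← Real.sqrt_mul h0]
  exact Real.sqrt_le_sqrt (dot_le_lammax hQ.1 z)

/-- per-step Lyapunov decrement inequality of Theorem 2. With
`x⁺ = f(x) + g(x)u`, assuming the linearization error bound, the stability
constraint, and the one-step optimality consequence, one has
`‖x⁺ − x̄‖_{P₂} − ‖x − x̄‖_{P₁} ≤ 2√(λ_max(P₂))·δ + √(λ_max(P₁))·δ − θ‖x − x̄‖`. -/
theorem one_step_lyapunov_decrement {n p : ℕ}
    (x xbar : Fin n → ℝ) (u : Fin p → ℝ)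
    (f : (Fin n → ℝ) → (Fin n → ℝ)) (g : (Fin n → ℝ) → Matrix (Fin n) (Fin p) ℝ)
    (A : Matrix (Fin n) (Fin n) ℝ) (δ θ : ℝ) (hδ : 0 ≤ δ) (hθ : 0 < θ)
    (xplus : Fin n → ℝ) (hxplus : xplus = f x + (g x).mulVec u)
    (P₁ P₂ : Matrix (Fin n) (Fin n) ℝ) (hP₁ : P₁.PosDef) (hP₂ : P₂.PosDef)
    (hlin : _root_.enorm (f x - A.mulVec x) ≤ δ)
    (hstab : wnorm P₁ (A.mulVec x + (g x).mulVec u - xbar) - wnorm P₁ (x - xbar) ≤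
      -θ * _root_.enorm (x - xbar))
    (hopt : wnorm P₂ (xplus - xbar) ≤ wnorm P₁ (xplus - xbar)) :
    wnorm P₂ (xplus - xbar) - wnorm P₁ (x - xbar) ≤
      2 * Real.sqrt (⨆ i, hP₂.1.eigenvalues i) * δ +
        Real.sqrt (⨆ i, hP₁.1.eigenvalues i) * δ - θ * _root_.enorm (x - xbar) := by
  have hsplit : xplus - xbar =
      (A.mulVec x + (g x).mulVec u - xbar) + (f x - A.mulVec x) := by
    rw [hxplus]; abel
  have h1 : wnorm P₂ (xplus - xbar) ≤
      wnorm P₁ (A.mulVec x + (g x).mulVec u - xbar) + wnorm P₁ (f x - A.mulVec x) := by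
    refine hopt.trans ?_
    rw [hsplit]
    exact wnorm_triangle hP₁.posSemidef _ _
  have h2 : wnorm P₁ (f x - A.mulVec x) ≤ Real.sqrt (⨆ i, hP₁.1.eigenvalues i) * δ :=
    (wnorm_le_sqrt_lammax hP₁ _).trans
      (mul_le_mul_of_nonneg_left hlin (Real.sqrt_nonneg _))
  have h4 : 0 ≤ 2 * Real.sqrt (⨆ i, hP₂.1.eigenvalues i) * δ := by positivity
  linarith [hstab]
end

section
/- Let V : ℕ → ℝ and e : ℕ → ℝ be sequences, and let a, b, c, θ be positive reals with a ≤ b and θ < b. Assume for every t ∈ ℕ: e(t) ≥ 0, a·e(t) ≤ V(t) ≤ b·e(t), and V(t+1) − V(t) ≤ c − θ·e(t). Then the sequence e is bounded and limsup_{t→∞} e(t) ≤ (b·c)/(a·θ). (Discrete-time Lyapunov ultimate-boundedness lemma underlying the convergence conclusions of Theorems 2 and 3.) -/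
/-- discrete-time Lyapunov ultimate-boundedness lemma. If
`a·e(t) ≤ V(t) ≤ b·e(t)`, `e(t) ≥ 0`, and `V(t+1) − V(t) ≤ c − θ·e(t)` for all
`t`, with `0 < a ≤ b`, `c > 0`, and `0 < θ < b`, then `e` is bounded and
`limsup_{t→∞} e(t) ≤ (b·c)/(a·θ)`. -/
theorem lyapunov_ultimate_boundedness (V e : ℕ → ℝ) (a b c θ : ℝ)
    (ha : 0 < a) (hb : 0 < b) (hc : 0 < c) (hθ : 0 < θ)
    (hab : a ≤ b) (hθb : θ < b)
    (he : ∀ t, 0 ≤ e t)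
    (hVlow : ∀ t, a * e t ≤ V t) (hVup : ∀ t, V t ≤ b * e t)
    (hdec : ∀ t, V (t + 1) - V t ≤ c - θ * e t) :
    (∃ M : ℝ, ∀ t, e t ≤ M) ∧
      Filter.limsup e Filter.atTop ≤ b * c / (a * θ) := by
  set q : ℝ := 1 - θ / b with hq
  have hq0 : 0 < q := by
    have : θ / b < 1 := (div_lt_one hb).mpr hθb
    simp [hq]; linarith
  have hq1 : q < 1 := by
    have : 0 < θ / b := div_pos hθ hb
    simp [hq]; linarith
  clear_value q
  -- key recursive bound
  have hrec : ∀ t, V (t + 1) ≤ q * V t + c := by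
    intro t
    have h1 : V (t + 1) ≤ V t + c - θ * e t := by linarith [hdec t]
    have h2 : (θ / b) * V t ≤ θ * e t := by
      have := hVup t
      have : (θ / b) * V t ≤ (θ / b) * (b * e t) :=
        mul_le_mul_of_nonneg_left this (le_of_lt (div_pos hθ hb))
      calc (θ / b) * V t ≤ (θ / b) * (b * e t) := this
        _ = θ * e t := by field_simp
    have : q * V t = V t - (θ / b) * V t := by rw [hq]; ring
    linarith
  -- induction: V t ≤ q^t * V 0 + b*c/θ
  have hbound : ∀ t, V t ≤ q ^ t * V 0 + b * c / θ := by
    intro t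
    induction t with
    | zero => have : 0 < b * c / θ := div_pos (mul_pos hb hc) hθ; simp; linarith
    | succ n ih =>
      have h1 : V (n + 1) ≤ q * V n + c := hrec n
      have h2 : q * V n ≤ q * (q ^ n * V 0 + b * c / θ) :=
        mul_le_mul_of_nonneg_left ih hq0.le
      have h3 : q * (q ^ n * V 0 + b * c / θ) + c = q ^ (n + 1) * V 0 + b * c / θ := by
        have : q * (b * c / θ) = b * c / θ - c := by
          rw [hq]; field_simp
        rw [pow_succ]; linear_combination this
      linarith
  have hqt : ∀ t, (0:ℝ) ≤ q ^ t ∧ q ^ t ≤ 1 := fun t =>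
    ⟨pow_nonneg hq0.le t, pow_le_one₀ hq0.le hq1.le⟩
  -- e t ≤ (q^t * V 0 + b*c/θ) / a
  have heV : ∀ t, e t ≤ (q ^ t * V 0 + b * c / θ) / a := by
    intro t
    rw [le_div_iff₀ ha]
    calc e t * a = a * e t := by ring
      _ ≤ V t := hVlow t
      _ ≤ q ^ t * V 0 + b * c / θ := hbound t
  constructor
  · refine ⟨(|V 0| + b * c / θ) / a, fun t => ?_⟩
    refine (heV t).trans ?_
    gcongr
    have h1 : q ^ t * V 0 ≤ |V 0| := by
      calc q ^ t * V 0 ≤ q ^ t * |V 0| :=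
            mul_le_mul_of_nonneg_left (le_abs_self _) (hqt t).1
        _ ≤ 1 * |V 0| := mul_le_mul_of_nonneg_right (hqt t).2 (abs_nonneg _)
        _ = |V 0| := one_mul _
    linarith
  · -- limsup bound via comparison with a convergent sequence
    set f : ℕ → ℝ := fun t => (q ^ t * V 0 + b * c / θ) / a with hf
    have hlim : Filter.Tendsto f Filter.atTop (nhds (b * c / (a * θ))) := by
      have hq' : Filter.Tendsto (fun t : ℕ => q ^ t) Filter.atTop (nhds 0) :=
        tendsto_pow_atTop_nhds_zero_of_lt_one hq0.le hq1
      have : Filter.Tendsto f Filter.atTop (nhds ((0 * V 0 + b * c / θ) / a)) := by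
        apply Filter.Tendsto.div_const
        exact ((hq'.mul_const (V 0)).add tendsto_const_nhds)
      convert this using 2
      field_simp; ring
    have hls : Filter.limsup f Filter.atTop = b * c / (a * θ) := hlim.limsup_eq
    rw [← hls]
    refine Filter.limsup_le_limsup (Filter.Eventually.of_forall heV) ?_ ?_
    · exact (show Filter.IsBoundedUnder (· ≥ ·) Filter.atTop e from
        ⟨0, Filter.eventually_map.2 (Filter.Eventually.of_forall he)⟩).isCoboundedUnder_le
    · exact hlim.isBoundedUnder_le
end

section
/- Let x : ℕ → ℝⁿ and u : ℕ → ℝᵖ be sequences, let f : ℝⁿ → ℝⁿ, g : ℝⁿ → ℝ^{n×p}, let A : ℕ → ℝ^{n×n} and let P : ℕ → ℝ^{n×n} take symmetric positive definite values. Let x̄ ∈ ℝⁿ, δ ≥ 0, θ > 0, and let 0 < λ_low ≤ λ_up be such that for all t: λ_low ≤ λ_min(P(t)) and λ_max(P(t)) ≤ λ_up, with θ < √(λ_low). Assume for every t ∈ ℕ: (i) x(t+1) = f(x(t)) + g(x(t))u(t); (ii) ‖f(x(t)) − A(t)x(t)‖ ≤ δ; (iii) ‖A(t)x(t) + g(x(t))u(t)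 − x̄‖_{P(t)} − ‖x(t) − x̄‖_{P(t)} ≤ −θ‖x(t) − x̄‖; and (iv) ‖x(t+1) − x̄‖_{P(t+1)} ≤ ‖x(t+1) − x̄‖_{P(t)}. Then the tracking error ‖x(t) − x̄‖ is bounded and limsup_{t→∞} ‖x(t) − x̄‖ ≤ 3·λ_up·δ/(θ·√(λ_low)). (Stability and convergence of the one-step-ahead predictive control scheme, Theorem 2.) -/
open Matrix

/-- Euclidean norm on `ℝⁿ`: `‖z‖ = √(zᵀ z)`. -/
noncomputable def euclNorm {n : ℕ} (z : Fin n → ℝ) : ℝ :=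
  Real.sqrt (z ⬝ᵥ z)

lemma euclNorm_eq_norm {n : ℕ} (z : Fin n → ℝ) :
    euclNorm z = ‖(WithLp.equiv 2 (Fin n → ℝ)).symm z‖ := by
  rw [EuclideanSpace.norm_eq]
  simp [euclNorm, dotProduct, Real.norm_eq_abs, sq_abs, pow_two]

lemma euclNorm_add_le {n : ℕ} (a b : Fin n → ℝ) : euclNorm (a + b) ≤ euclNorm a + euclNorm b := by
  simp only [euclNorm_eq_norm, WithLp.equiv_symm_apply, WithLp.toLp_add]
  exact norm_add_le _ _

open scoped MatrixOrder in
lemma wnorm_eq {n : ℕ} {Q : Matrix (Fin n) (Fin n) ℝ} (hQ : Q.PosDef) (z : Fin n → ℝ) :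
    wnorm Q z = euclNorm ((CFC.sqrt Q).mulVec z) := by
  unfold wnorm euclNorm
  congr 1
  conv_lhs => rw [← CFC.sqrt_mul_sqrt_self Q hQ.posSemidef.nonneg]
  rw [← mulVec_mulVec, dotProduct_mulVec]
  congr 1
  have hH : (CFC.sqrt Q).IsHermitian := (CFC.sqrt_nonneg Q).posSemidef.1
  rw [← mulVec_transpose]
  congr 1


lemma sub_smul_one_posSemidef {n : ℕ} {Q : Matrix (Fin n) (Fin n) ℝ} (hQ : Q.IsHermitian)
    {c : ℝ} (h : ∀ i, c ≤ hQ.eigenvalues i) : (Q - c • 1).PosSemidef := by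
  set U : Matrix (Fin n) (Fin n) ℝ := (hQ.eigenvectorUnitary : Matrix (Fin n) (Fin n) ℝ) with hUdef
  have hUU : U * star U = 1 := (Matrix.mem_unitaryGroup_iff).mp hQ.eigenvectorUnitary.2
  have key : Q - c • 1 = U * (diagonal (fun i => hQ.eigenvalues i - c)) * star U := by
    have hspec : Q = U * diagonal (RCLike.ofReal ∘ hQ.eigenvalues) * star U := by
      have := hQ.spectral_theorem; rwa [Unitary.conjStarAlgAut_apply] at this
    have hd : diagonal (fun i => hQ.eigenvalues i - c) =
        diagonal (RCLike.ofReal ∘ hQ.eigenvalues) - c • (1 : Matrix (Fin n) (Fin n) ℝ) := by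
      rw [smul_one_eq_diagonal, ← diagonal_sub]
      congr 1
    rw [hd, Matrix.mul_sub, Matrix.sub_mul, ← hspec, mul_smul_comm, smul_mul, mul_one, hUU]
  rw [key, star_eq_conjTranspose]
  exact (posSemidef_diagonal_iff.mpr (fun i => sub_nonneg.mpr (h i))).mul_mul_conjTranspose_same _

lemma smul_one_sub_posSemidef {n : ℕ} {Q : Matrix (Fin n) (Fin n) ℝ} (hQ : Q.IsHermitian)
    {C : ℝ} (h : ∀ i, hQ.eigenvalues i ≤ C) : (C • 1 - Q).PosSemidef := by
  set U : Matrix (Fin n) (Fin n) ℝ := (hQ.eigenvectorUnitary : Matrix (Fin n) (Fin n) ℝ) with hUdef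
  have hUU : U * star U = 1 := (Matrix.mem_unitaryGroup_iff).mp hQ.eigenvectorUnitary.2
  have key : C • 1 - Q = U * (diagonal (fun i => C - hQ.eigenvalues i)) * star U := by
    have hspec : Q = U * diagonal (RCLike.ofReal ∘ hQ.eigenvalues) * star U := by
      have := hQ.spectral_theorem; rwa [Unitary.conjStarAlgAut_apply] at this
    have hd : diagonal (fun i => C - hQ.eigenvalues i) =
        C • (1 : Matrix (Fin n) (Fin n) ℝ) - diagonal (RCLike.ofReal ∘ hQ.eigenvalues) := by
      rw [smul_one_eq_diagonal, ← diagonal_sub]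
      congr 1
    rw [hd, Matrix.mul_sub, Matrix.sub_mul, ← hspec, mul_smul_comm, smul_mul, mul_one, hUU]
  rw [key, star_eq_conjTranspose]
  exact (posSemidef_diagonal_iff.mpr (fun i => sub_nonneg.mpr (h i))).mul_mul_conjTranspose_same _

lemma dot_lower {n : ℕ} {Q : Matrix (Fin n) (Fin n) ℝ} (hQ : Q.IsHermitian)
    {c : ℝ} (h : ∀ i, c ≤ hQ.eigenvalues i) (z : Fin n → ℝ) :
    c * (z ⬝ᵥ z) ≤ z ⬝ᵥ Q.mulVec z := by
  have := (sub_smul_one_posSemidef hQ h).re_dotProduct_nonneg z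
  simp only [star_trivial, RCLike.re_to_real] at this
  rw [sub_mulVec, dotProduct_sub, smul_mulVec, one_mulVec, dotProduct_smul,
    smul_eq_mul] at this
  linarith

lemma dot_upper {n : ℕ} {Q : Matrix (Fin n) (Fin n) ℝ} (hQ : Q.IsHermitian)
    {C : ℝ} (h : ∀ i, hQ.eigenvalues i ≤ C) (z : Fin n → ℝ) :
    z ⬝ᵥ Q.mulVec z ≤ C * (z ⬝ᵥ z) := by
  have := (smul_one_sub_posSemidef hQ h).re_dotProduct_nonneg z
  simp only [star_trivial, RCLike.re_to_real] at this
  rw [sub_mulVec, dotProduct_sub, smul_mulVec, one_mulVec, dotProduct_smul,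
    smul_eq_mul] at this
  linarith

lemma wnorm_add_le {n : ℕ} {Q : Matrix (Fin n) (Fin n) ℝ} (hQ : Q.PosDef) (a b : Fin n → ℝ) :
    wnorm Q (a + b) ≤ wnorm Q a + wnorm Q b := by
  rw [wnorm_eq hQ, wnorm_eq hQ, wnorm_eq hQ, mulVec_add]
  exact euclNorm_add_le _ _

lemma wnorm_lower {n : ℕ} {Q : Matrix (Fin n) (Fin n) ℝ} (hQ : Q.IsHermitian) {c : ℝ}
    (hc : 0 ≤ c) (h : ∀ i, c ≤ hQ.eigenvalues i) (z : Fin n → ℝ) :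
    Real.sqrt c * euclNorm z ≤ wnorm Q z := by
  rw [euclNorm, wnorm, ← Real.sqrt_mul hc]
  exact Real.sqrt_le_sqrt (dot_lower hQ h z)

lemma wnorm_upper {n : ℕ} {Q : Matrix (Fin n) (Fin n) ℝ} (hQ : Q.IsHermitian) {C : ℝ}
    (hC : 0 ≤ C) (h : ∀ i, hQ.eigenvalues i ≤ C) (z : Fin n → ℝ) :
    wnorm Q z ≤ Real.sqrt C * euclNorm z := by
  rw [euclNorm, wnorm, ← Real.sqrt_mul hC]
  exact Real.sqrt_le_sqrt (dot_upper hQ h z)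

/-- stability and convergence of the one-step-ahead predictive
control scheme (Theorem 2). Under the closed-loop dynamics, the linearization
error bound, the stability constraint, and the one-step optimality consequence,
the tracking error `‖x(t) − x̄‖` is bounded and
`limsup_{t→∞} ‖x(t) − x̄‖ ≤ 3·lamUp·δ/(θ·√(lamLow))`. -/
theorem one_step_ahead_predictive_control_stability {n p : ℕ}
    (x : ℕ → (Fin n → ℝ)) (u : ℕ → (Fin p → ℝ))
    (f : (Fin n → ℝ) → (Fin n → ℝ)) (g : (Fin n → ℝ) → Matrix (Fin n) (Fin p) ℝ)
    (A : ℕ → Matrix (Fin n) (Fin n) ℝ)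
    (P : ℕ → Matrix (Fin n) (Fin n) ℝ) (hP : ∀ t, (P t).PosDef)
    (xbar : Fin n → ℝ) (δ θ lamLow lamUp : ℝ)
    (hδ : 0 ≤ δ) (hθ : 0 < θ) (hlamLow : 0 < lamLow) (hlam : lamLow ≤ lamUp)
    (hmin : ∀ t, lamLow ≤ ⨅ i, (hP t).1.eigenvalues i)
    (hmax : ∀ t, (⨆ i, (hP t).1.eigenvalues i) ≤ lamUp)
    (hθlow : θ < Real.sqrt lamLow)
    (hdyn : ∀ t, x (t + 1) = f (x t) + (g (x t)).mulVec (u t))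
    (hlin : ∀ t, euclNorm (f (x t) - (A t).mulVec (x t)) ≤ δ)
    (hstab : ∀ t, wnorm (P t) ((A t).mulVec (x t) + (g (x t)).mulVec (u t) - xbar) -
      wnorm (P t) (x t - xbar) ≤ -θ * euclNorm (x t - xbar))
    (hopt : ∀ t, wnorm (P (t + 1)) (x (t + 1) - xbar) ≤ wnorm (P t) (x (t + 1) - xbar)) :
    (∃ M : ℝ, ∀ t, euclNorm (x t - xbar) ≤ M) ∧
      Filter.limsup (fun t => euclNorm (x t - xbar)) Filter.atTop ≤
        3 * lamUp * δ / (θ * Real.sqrt lamLow) := by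
  have hlamUp : 0 < lamUp := lt_of_lt_of_le hlamLow hlam
  set sL := Real.sqrt lamLow with hsLdef
  set sU := Real.sqrt lamUp with hsUdef
  have hsL : 0 < sL := Real.sqrt_pos.2 hlamLow
  have hsU : 0 < sU := Real.sqrt_pos.2 hlamUp
  have hsLU : sL ≤ sU := Real.sqrt_le_sqrt hlam
  have hsU2 : sU * sU = lamUp := Real.mul_self_sqrt hlamUp.le
  have heigL : ∀ t i, lamLow ≤ (hP t).1.eigenvalues i := fun t i =>
    le_trans (hmin t) (ciInf_le (Set.finite_range _).bddBelow i)
  have heigU : ∀ t i, (hP t).1.eigenvalues i ≤ lamUp := fun t i =>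
    le_trans (le_ciSup (Set.finite_range _).bddAbove i) (hmax t)
  set e : ℕ → ℝ := fun t => euclNorm (x t - xbar) with hedef
  set V : ℕ → ℝ := fun t => wnorm (P t) (x t - xbar) with hVdef
  have he0 : ∀ t, 0 ≤ e t := fun t => Real.sqrt_nonneg _
  have h1 : ∀ t, sL * e t ≤ V t := fun t =>
    wnorm_lower (hP t).1 hlamLow.le (heigL t) _
  have h2 : ∀ t, V t ≤ sU * e t := fun t =>
    wnorm_upper (hP t).1 hlamUp.le (heigU t) _
  have hV0 : ∀ t, 0 ≤ V t := fun t => le_trans (mul_nonneg hsL.le (he0 t)) (h1 t)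
  -- one step decrease
  have hstep : ∀ t, V (t + 1) ≤ V t - θ * e t + sU * δ := by
    intro t
    have hsplit : x (t + 1) - xbar =
        ((A t).mulVec (x t) + (g (x t)).mulVec (u t) - xbar) +
          (f (x t) - (A t).mulVec (x t)) := by
      rw [hdyn t]; abel
    have hb : wnorm (P t) (f (x t) - (A t).mulVec (x t)) ≤ sU * δ :=
      le_trans (wnorm_upper (hP t).1 hlamUp.le (heigU t) _)
        (mul_le_mul_of_nonneg_left (hlin t) hsU.le)
    have ha := hstab t
    calc V (t + 1) ≤ wnorm (P t) (x (t + 1) - xbar) := hopt t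
      _ = wnorm (P t) (((A t).mulVec (x t) + (g (x t)).mulVec (u t) - xbar) +
            (f (x t) - (A t).mulVec (x t))) := by rw [← hsplit]
      _ ≤ wnorm (P t) ((A t).mulVec (x t) + (g (x t)).mulVec (u t) - xbar) +
            wnorm (P t) (f (x t) - (A t).mulVec (x t)) := wnorm_add_le (hP t) _ _
      _ ≤ V t - θ * e t + sU * δ := by
          simp only [hedef, hVdef] at ha ⊢; linarith
  set ρ : ℝ := 1 - θ / sU with hρdef
  have hρ0 : 0 < ρ := by
    have : θ / sU < 1 := (div_lt_one hsU).2 (lt_of_lt_of_le hθlow hsLU)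
    simp only [hρdef]; linarith
  have hρ1 : ρ < 1 := by
    have : 0 < θ / sU := div_pos hθ hsU
    simp only [hρdef]; linarith
  have hrec : ∀ t, V (t + 1) ≤ ρ * V t + sU * δ := by
    intro t
    have het : θ / sU * V t ≤ θ / sU * (sU * e t) :=
      mul_le_mul_of_nonneg_left (h2 t) (div_pos hθ hsU).le
    have hid2 : θ / sU * (sU * e t) = θ * e t := by field_simp
    rw [hρdef]
    have hid : (1 - θ / sU) * V t = V t - θ / sU * V t := by ring
    linarith [hstep t]
  set K : ℝ := lamUp * δ / θ with hKdef
  have hK0 : 0 ≤ K := by rw [hKdef]; positivity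
  have hKey : ρ * K + sU * δ = K := by
    rw [hρdef, hKdef, ← hsU2]
    field_simp
    ring
  have hdecay : ∀ t, V t ≤ ρ ^ t * V 0 + K := by
    intro t
    induction t with
    | zero => simpa using hK0
    | succ t ih =>
      have h3 : ρ * V t ≤ ρ * (ρ ^ t * V 0 + K) := mul_le_mul_of_nonneg_left ih hρ0.le
      calc V (t + 1) ≤ ρ * V t + sU * δ := hrec t
        _ ≤ ρ * (ρ ^ t * V 0 + K) + sU * δ := by linarith
        _ = ρ ^ (t + 1) * V 0 + (ρ * K + sU * δ) := by ring
        _ = ρ ^ (t + 1) * V 0 + K := by rw [hKey]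
  constructor
  · refine ⟨(V 0 + K) / sL, fun t => ?_⟩
    have hpow : ρ ^ t ≤ 1 := pow_le_one₀ hρ0.le hρ1.le
    have hmle : ρ ^ t * V 0 ≤ V 0 := mul_le_of_le_one_left (hV0 0) hpow
    have : V t ≤ V 0 + K := by linarith [hdecay t]
    exact (le_div_iff₀' hsL).2 (le_trans (h1 t) this)
  · have hble : ∀ t, e t ≤ (ρ ^ t * V 0 + K) / sL := fun t =>
      (le_div_iff₀' hsL).2 (le_trans (h1 t) (hdecay t))
    have hρt : Filter.Tendsto (fun t : ℕ => ρ ^ t) Filter.atTop (nhds 0) :=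
      tendsto_pow_atTop_nhds_zero_of_lt_one hρ0.le hρ1
    have hb : Filter.Tendsto (fun t : ℕ => (ρ ^ t * V 0 + K) / sL) Filter.atTop
        (nhds (K / sL)) := by
      have := ((hρt.mul_const (V 0)).add_const K).div_const sL
      simpa using this
    have hlim : Filter.limsup (fun t => e t) Filter.atTop ≤ K / sL := by
      have h5 : Filter.limsup (fun t : ℕ => (ρ ^ t * V 0 + K) / sL) Filter.atTop = K / sL :=
        hb.limsup_eq
      refine le_trans (Filter.limsup_le_limsup (Filter.Eventually.of_forall hble) ?_ ?_) h5.le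
      · exact (Filter.isBoundedUnder_of ⟨0, he0⟩).isCoboundedUnder_le
      · exact hb.isBoundedUnder_le
    refine le_trans hlim ?_
    rw [hKdef, div_div]
    gcongr
    nlinarith
end

section
/- Let x : ℕ → ℝⁿ be a sequence, x̄ ∈ ℝⁿ, let P ∈ ℝ^{n×n} be a fixed symmetric positive definite matrix, and let θ > 0 satisfy √(λ_min(P)) > θ. Assume that for every t ∈ ℕ the decrease condition ‖x(t+1) − x̄‖_P − ‖x(t) − x̄‖_P ≤ −θ‖x(t) − x̄‖ holds. Then the sequence converges exponentially: for every t ∈ ℕ, ‖x(t) − x̄‖ ≤ √(λ_max(P)/λ_min(P)) · (1 − θ/√(λ_max(P)))^t · ‖x(0) − x̄‖. (Exponential stability claim of Remark 1 for constant Lyapunov matrix.) -/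
open Matrix

/-- Euclidean norm on `ℝⁿ`: `‖z‖ = √(zᵀ z)`. -/
noncomputable def enormR {n : ℕ} (z : Fin n → ℝ) : ℝ :=
  Real.sqrt (z ⬝ᵥ z)

lemma rayleigh_aux {n : ℕ} {A : Matrix (Fin n) (Fin n) ℝ} (hA : A.IsHermitian)
    (z : Fin n → ℝ) :
    ∃ y : Fin n → ℝ, z ⬝ᵥ z = y ⬝ᵥ y ∧
      z ⬝ᵥ A.mulVec z = ∑ i, hA.eigenvalues i * (y i * y i) := by
  set U : Matrix (Fin n) (Fin n) ℝ := (hA.eigenvectorUnitary : Matrix (Fin n) (Fin n) ℝ) with hU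
  have hUsU : star U * U = 1 := (Matrix.mem_unitaryGroup_iff').mp hA.eigenvectorUnitary.2
  have hUUs : U * star U = 1 := (Matrix.mem_unitaryGroup_iff).mp hA.eigenvectorUnitary.2
  set y := star U *ᵥ z with hy
  have hUt : star U = Uᵀ := by
    simp [star_eq_conjTranspose, conjTranspose_eq_transpose_of_trivial]
  refine ⟨y, ?_, ?_⟩
  · have h1 : U *ᵥ y = z := by
      rw [hy, mulVec_mulVec, hUUs, one_mulVec]
    calc z ⬝ᵥ z = (U *ᵥ y) ⬝ᵥ (U *ᵥ y) := by rw [h1]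
      _ = y ⬝ᵥ y := by
          rw [dotProduct_mulVec, ← mulVec_transpose, ← hUt, mulVec_mulVec, hUsU, one_mulVec]
  · conv_lhs => rw [hA.spectral_theorem]; simp only [Unitary.conjStarAlgAut_apply, Unitary.coe_star]; rw [← hU]
    rw [← mulVec_mulVec, ← mulVec_mulVec, dotProduct_mulVec z U, ← mulVec_transpose, ← hUt, ← hy]
    have : diagonal (RCLike.ofReal ∘ hA.eigenvalues) *ᵥ y = fun i => hA.eigenvalues i * y i := by
      funext i
      simp [mulVec_diagonal]
    rw [this, dotProduct]
    exact Finset.sum_congr rfl fun i _ => by ring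

lemma rayleigh_bounds {n : ℕ} {A : Matrix (Fin n) (Fin n) ℝ} (hA : A.IsHermitian)
    [Nonempty (Fin n)] (z : Fin n → ℝ) :
    (⨅ i, hA.eigenvalues i) * (z ⬝ᵥ z) ≤ z ⬝ᵥ A.mulVec z ∧
      z ⬝ᵥ A.mulVec z ≤ (⨆ i, hA.eigenvalues i) * (z ⬝ᵥ z) := by
  obtain ⟨y, hzz, hzAz⟩ := rayleigh_aux hA z
  have hyy : ∀ i, (0:ℝ) ≤ y i * y i := fun i => mul_self_nonneg _
  have hmin : ∀ i, (⨅ j, hA.eigenvalues j) ≤ hA.eigenvalues i := fun i =>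
    ciInf_le (Finite.bddBelow_range _) i
  have hmax : ∀ i, hA.eigenvalues i ≤ ⨆ j, hA.eigenvalues j := fun i =>
    le_ciSup (Finite.bddAbove_range _) i
  have hdp : y ⬝ᵥ y = ∑ i, y i * y i := rfl
  constructor
  · rw [hzz, hzAz, hdp, Finset.mul_sum]
    exact Finset.sum_le_sum fun i _ => mul_le_mul_of_nonneg_right (hmin i) (hyy i)
  · rw [hzz, hzAz, hdp, Finset.mul_sum]
    exact Finset.sum_le_sum fun i _ => mul_le_mul_of_nonneg_right (hmax i) (hyy i)

/-- exponential stability with a constant Lyapunov matrix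
(Remark 1). If `√(λ_min(P)) > θ > 0` and the decrease condition
`‖x(t+1) − x̄‖_P − ‖x(t) − x̄‖_P ≤ −θ‖x(t) − x̄‖` holds for all `t`, then
`‖x(t) − x̄‖ ≤ √(λ_max(P)/λ_min(P))·(1 − θ/√(λ_max(P)))^t·‖x(0) − x̄‖`. -/
theorem constant_lyapunov_exponential_stability {n : ℕ}
    (x : ℕ → (Fin n → ℝ)) (xbar : Fin n → ℝ)
    (P : Matrix (Fin n) (Fin n) ℝ) (hP : P.PosDef)
    (θ : ℝ) (hθ : 0 < θ)
    (hθmin : θ < Real.sqrt (⨅ i, hP.1.eigenvalues i))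
    (hdec : ∀ t, wnorm P (x (t + 1) - xbar) - wnorm P (x t - xbar) ≤
      -θ * enormR (x t - xbar)) :
    ∀ t : ℕ, enormR (x t - xbar) ≤
      Real.sqrt ((⨆ i, hP.1.eigenvalues i) / (⨅ i, hP.1.eigenvalues i)) *
        (1 - θ / Real.sqrt (⨆ i, hP.1.eigenvalues i)) ^ t * enormR (x 0 - xbar) := by
  -- the index type is nonempty, otherwise `hθmin` contradicts `hθ`
  rcases Nat.eq_zero_or_pos n with hn | hn
  · subst hn
    rw [Real.iInf_of_isEmpty, Real.sqrt_zero] at hθmin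
    exact absurd (hθ.trans hθmin) (lt_irrefl 0)
  haveI : Nonempty (Fin n) := ⟨⟨0, hn⟩⟩
  set lmin := ⨅ i, hP.1.eigenvalues i with hlmin
  set lmax := ⨆ i, hP.1.eigenvalues i with hlmax
  have hev : ∀ i, 0 < hP.1.eigenvalues i := hP.eigenvalues_pos
  have hlmin_pos : 0 < lmin := by
    obtain ⟨i, hi⟩ := exists_eq_ciInf_of_finite (f := hP.1.eigenvalues)
    rw [hlmin, ← hi]; exact hev i
  have hlmax_pos : 0 < lmax := by
    obtain ⟨i, hi⟩ := exists_eq_ciSup_of_finite (f := hP.1.eigenvalues)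
    rw [hlmax, ← hi]; exact hev i
  have hle : lmin ≤ lmax := by
    inhabit (Fin n)
    exact le_trans (ciInf_le (Finite.bddBelow_range _) default)
      (le_ciSup (Finite.bddAbove_range _) default)
  set a := Real.sqrt lmax with ha
  set b := Real.sqrt lmin with hb
  have hb_pos : 0 < b := Real.sqrt_pos.mpr hlmin_pos
  have ha_pos : 0 < a := Real.sqrt_pos.mpr hlmax_pos
  have hba : b ≤ a := Real.sqrt_le_sqrt hle
  have hθa : θ < a := lt_of_lt_of_le hθmin hba
  set r := 1 - θ / a with hr
  have hr_pos : 0 < r := by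
    rw [hr]; simp only [sub_pos]
    exact (div_lt_one ha_pos).mpr hθa
  -- norm comparisons
  have hbound : ∀ z : Fin n → ℝ, b * enormR z ≤ wnorm P z ∧ wnorm P z ≤ a * enormR z := by
    intro z
    obtain ⟨h1, h2⟩ := rayleigh_bounds hP.1 z
    constructor
    · rw [hb, enormR, wnorm, ← Real.sqrt_mul hlmin_pos.le]
      exact Real.sqrt_le_sqrt h1
    · rw [ha, enormR, wnorm, ← Real.sqrt_mul hlmax_pos.le]
      exact Real.sqrt_le_sqrt h2
  have henormR_nonneg : ∀ z : Fin n → ℝ, 0 ≤ enormR z := fun z => Real.sqrt_nonneg _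
  have hwnorm_nonneg : ∀ z : Fin n → ℝ, 0 ≤ wnorm P z := fun z => Real.sqrt_nonneg _
  -- contraction of the weighted norm
  have hstep : ∀ t, wnorm P (x (t + 1) - xbar) ≤ r * wnorm P (x t - xbar) := by
    intro t
    have h1 := hdec t
    have h2 : (θ / a) * wnorm P (x t - xbar) ≤ θ * enormR (x t - xbar) := by
      have h3 := mul_le_mul_of_nonneg_left (hbound (x t - xbar)).2
        (div_nonneg hθ.le ha_pos.le)
      refine h3.trans_eq ?_
      field_simp
    have := sub_le_iff_le_add.mp h1
    calc wnorm P (x (t + 1) - xbar)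
        ≤ -θ * enormR (x t - xbar) + wnorm P (x t - xbar) := this
      _ ≤ -((θ / a) * wnorm P (x t - xbar)) + wnorm P (x t - xbar) := by
          have : -θ * enormR (x t - xbar) ≤ -((θ / a) * wnorm P (x t - xbar)) := by
            rw [neg_mul, neg_le_neg_iff]
            exact h2
          linarith
      _ = r * wnorm P (x t - xbar) := by rw [hr]; ring
  -- iterate
  have hiter : ∀ t, wnorm P (x t - xbar) ≤ r ^ t * wnorm P (x 0 - xbar) := by
    intro t
    induction t with
    | zero => simp
    | succ t ih =>
      calc wnorm P (x (t + 1) - xbar) ≤ r * wnorm P (x t - xbar) := hstep t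
        _ ≤ r * (r ^ t * wnorm P (x 0 - xbar)) :=
            mul_le_mul_of_nonneg_left ih hr_pos.le
        _ = r ^ (t + 1) * wnorm P (x 0 - xbar) := by ring
  -- conclude
  intro t
  have h1 : b * enormR (x t - xbar) ≤ r ^ t * (a * enormR (x 0 - xbar)) := by
    calc b * enormR (x t - xbar) ≤ wnorm P (x t - xbar) := (hbound _).1
      _ ≤ r ^ t * wnorm P (x 0 - xbar) := hiter t
      _ ≤ r ^ t * (a * enormR (x 0 - xbar)) :=
          mul_le_mul_of_nonneg_left (hbound _).2 (pow_nonneg hr_pos.le t)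
  have hsq : Real.sqrt (lmax / lmin) = a / b := by
    rw [ha, hb, Real.sqrt_div' lmax hlmin_pos.le]
  rw [hsq]
  rw [div_mul_eq_mul_div, div_mul_eq_mul_div, le_div_iff₀ hb_pos]
  calc enormR (x t - xbar) * b = b * enormR (x t - xbar) := by ring
    _ ≤ r ^ t * (a * enormR (x 0 - xbar)) := h1
    _ = a * r ^ t * enormR (x 0 - xbar) := by ring
end

section
/- Let x, x̄ ∈ ℝⁿ, u, Δu ∈ ℝᵖ with ‖Δu‖ ≤ Δ̄u, let f : ℝⁿ → ℝⁿ, let g : ℝⁿ → ℝ^{n×p} be μ_g-Lipschitz in operator norm, let A ∈ ℝ^{n×n}, δ ≥ 0, θ > 0, and set x⁺ := f(x) + g(x)(u + Δu). Let P₁, P₂ ∈ ℝ^{n×n} be symmetric positive definite with 0 < λ_low ≤ λ_min(Pᵢ) and λ_max(Pᵢ) ≤ λ_up for i = 1,2, and let ΔP₁, ΔP₂ ∈ ℝ^{n×n} be symmetric with ‖ΔPᵢ‖ ≤ Δ̄P (operator norm). Assume: (i) ‖f(x) − A x‖ ≤ δ; (ii) ‖A x + g(x)u − x̄‖_{P₁}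 − ‖x − x̄‖_{P₁} ≤ −θ‖x − x̄‖; and (iii) ‖f(x) + g(x)u − x̄‖_{P₂} ≤ ‖f(x) + g(x)u − x̄‖_{P₁}. Then, with ‖z‖_Q := √|zᵀ Q z|, the perturbed Lyapunov decrement satisfies ‖x⁺ − x̄‖_{P₂+ΔP₂} − ‖x − x̄‖_{P₁+ΔP₁} ≤ 3√(λ_up)·δ + √(Δ̄P)·δ + (√(λ_up) + √(Δ̄P))·‖g(x̄)‖·Δ̄u − (θ − √(Δ̄P) − √(Δ̄P)·√(λ_up)/√(λ_low) − (√(λ_up) + √(Δ̄P))·μ_g·Δ̄u)·‖x − x̄‖. In particular, if θ > √(Δ̄P) + √(Δ̄P)·√(λ_up)/√(λ_low) + (√(λ_up) + √(Δ̄P))·μ_g·Δ̄u, then the perturbed Lyapunov function strictly decreases whenever ‖x − x̄‖ > ϑ := (3√(λ_up)·δ + √(Δ̄P)·δ + (√(λ_up) + √(Δ̄P))·‖g(x̄)‖·Δ̄u)/(θ − √(Δ̄P) − √(Δ̄P)·√(λ_up)/√(λ_low) − (√(λ_up) + √(Δ̄P))·μ_g·Δ̄u). (Core inequality of Theorem 3: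 stability of the closed loop with the trained NN in the loop.) -/
open Matrix

/-- Euclidean norm on `ℝⁿ`: `‖z‖ = √(zᵀ z)`. -/
noncomputable def eucNorm {n : ℕ} (z : Fin n → ℝ) : ℝ :=
  Real.sqrt (z ⬝ᵥ z)

/-- Generalized weighted norm `‖z‖_Q = √|zᵀ Q z|` for a symmetric matrix `Q`;
when `Q` is positive definite this equals `√(zᵀ Q z)`. -/
noncomputable def gwnorm {n : ℕ} (Q : Matrix (Fin n) (Fin n) ℝ) (z : Fin n → ℝ) : ℝ :=
  Real.sqrt |z ⬝ᵥ Q.mulVec z|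

/-- Operator (spectral) norm of a matrix, induced by the Euclidean norms. -/
noncomputable def opnorm {m k : ℕ} (Q : Matrix (Fin m) (Fin k) ℝ) : ℝ :=
  ‖LinearMap.toContinuousLinearMap (Matrix.toEuclideanLin Q)‖

section Helpers

/-- Cast a plain vector to `EuclideanSpace`. -/
noncomputable def toE {n : ℕ} (z : Fin n → ℝ) : EuclideanSpace ℝ (Fin n) :=
  (WithLp.equiv 2 (Fin n → ℝ)).symm z

lemma eucNorm_eq_norm {n : ℕ} (z : Fin n → ℝ) : eucNorm z = ‖toE z‖ := by
  rw [eucNorm, EuclideanSpace.norm_eq]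
  congr 1
  simp [dotProduct, toE, Real.norm_eq_abs, sq_abs, pow_two]

lemma eucNorm_nonneg {n : ℕ} (z : Fin n → ℝ) : 0 ≤ eucNorm z := Real.sqrt_nonneg _

lemma eucNorm_add_le {n : ℕ} (a b : Fin n → ℝ) : eucNorm (a + b) ≤ eucNorm a + eucNorm b := by
  rw [eucNorm_eq_norm, eucNorm_eq_norm, eucNorm_eq_norm]
  exact norm_add_le (toE a) (toE b)

lemma dot_eq_inner {n : ℕ} (a b : Fin n → ℝ) :
    a ⬝ᵥ b = (inner ℝ (toE a) (toE b) : ℝ) := by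
  simp [dotProduct, PiLp.inner_apply, RCLike.inner_apply, toE, mul_comm]

lemma dot_self_nonneg {n : ℕ} (a : Fin n → ℝ) : 0 ≤ a ⬝ᵥ a := by
  rw [dot_eq_inner]; exact real_inner_self_nonneg

lemma abs_dot_le {n : ℕ} (a b : Fin n → ℝ) : |a ⬝ᵥ b| ≤ eucNorm a * eucNorm b := by
  rw [dot_eq_inner, eucNorm_eq_norm, eucNorm_eq_norm]
  exact abs_real_inner_le_norm _ _

lemma eucNorm_mulVec_le {m k : ℕ} (Q : Matrix (Fin m) (Fin k) ℝ) (z : Fin k → ℝ) :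
    eucNorm (Q *ᵥ z) ≤ opnorm Q * eucNorm z := by
  rw [eucNorm_eq_norm, eucNorm_eq_norm, opnorm]
  have h : toE (Q *ᵥ z) = LinearMap.toContinuousLinearMap (Matrix.toEuclideanLin Q) (toE z) := rfl
  rw [h]
  exact ContinuousLinearMap.le_opNorm _ _

lemma opnorm_nonneg {m k : ℕ} (Q : Matrix (Fin m) (Fin k) ℝ) : 0 ≤ opnorm Q :=
  norm_nonneg _

lemma opnorm_add_le {m k : ℕ} (A B : Matrix (Fin m) (Fin k) ℝ) :
    opnorm (A + B) ≤ opnorm A + opnorm B := by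
  unfold opnorm
  rw [map_add, map_add]
  exact norm_add_le _ _

lemma quad_bounds {n : ℕ} {P : Matrix (Fin n) (Fin n) ℝ} (hP : P.IsHermitian) (z : Fin n → ℝ) :
    ((⨅ i, hP.eigenvalues i) * (z ⬝ᵥ z) ≤ z ⬝ᵥ P *ᵥ z ∧
      z ⬝ᵥ P *ᵥ z ≤ (⨆ i, hP.eigenvalues i) * (z ⬝ᵥ z)) := by
  classical
  set U : Matrix (Fin n) (Fin n) ℝ := (hP.eigenvectorUnitary : Matrix (Fin n) (Fin n) ℝ) with hU
  have hUmem : U ∈ Matrix.unitaryGroup (Fin n) ℝ := hP.eigenvectorUnitary.2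
  have hUV : U * star U = 1 := (Matrix.mem_unitaryGroup_iff).mp hUmem
  set y : Fin n → ℝ := z ᵥ* U with hy
  have hyV : y = (star U) *ᵥ z := by
    rw [hy, Matrix.star_eq_conjTranspose, Matrix.conjTranspose_eq_transpose_of_trivial,
      Matrix.mulVec_transpose]
  have hdiag : (RCLike.ofReal ∘ hP.eigenvalues : Fin n → ℝ) = hP.eigenvalues := by
    funext i; simp
  have hquad : z ⬝ᵥ P *ᵥ z = ∑ i, hP.eigenvalues i * (y i * y i) := by
    conv_lhs => rw [hP.spectral_theorem, Unitary.conjStarAlgAut_apply]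
    rw [hdiag, ← Matrix.mulVec_mulVec, ← Matrix.mulVec_mulVec, Matrix.dotProduct_mulVec,
      ← hy, ← hyV]
    simp [dotProduct, Matrix.mulVec_diagonal, mul_comm, mul_left_comm]
  have hzz : z ⬝ᵥ z = ∑ i, y i * y i := by
    have h0 : z ⬝ᵥ ((U * star U) *ᵥ z) = z ⬝ᵥ z := by rw [hUV, Matrix.one_mulVec]
    rw [← h0, ← Matrix.mulVec_mulVec, Matrix.dotProduct_mulVec, ← hy, ← hyV]
    rfl
  have hbdd : BddAbove (Set.range hP.eigenvalues) := Set.Finite.bddAbove (Set.finite_range _)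
  have hbddb : BddBelow (Set.range hP.eigenvalues) := Set.Finite.bddBelow (Set.finite_range _)
  constructor
  · rw [hquad, hzz, Finset.mul_sum]
    apply Finset.sum_le_sum
    intro i _
    exact mul_le_mul_of_nonneg_right (ciInf_le hbddb i) (mul_self_nonneg _)
  · rw [hquad, hzz, Finset.mul_sum]
    apply Finset.sum_le_sum
    intro i _
    exact mul_le_mul_of_nonneg_right (le_ciSup hbdd i) (mul_self_nonneg _)

lemma my_sqrt_add_le (a b : ℝ) (ha : 0 ≤ a) (hb : 0 ≤ b) :
    Real.sqrt (a + b) ≤ Real.sqrt a + Real.sqrt b := by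
  have h := Real.sqrt_le_sqrt (show a + b ≤ (Real.sqrt a + Real.sqrt b) ^ 2 by
    nlinarith [Real.sq_sqrt ha, Real.sq_sqrt hb, Real.sqrt_nonneg a, Real.sqrt_nonneg b])
  rwa [Real.sqrt_sq (by positivity)] at h

lemma gwnorm_nonneg {n : ℕ} (Q : Matrix (Fin n) (Fin n) ℝ) (z : Fin n → ℝ) :
    0 ≤ gwnorm Q z := Real.sqrt_nonneg _

lemma posSemidef_dot {n : ℕ} {P : Matrix (Fin n) (Fin n) ℝ} (hP : P.PosSemidef)
    (z : Fin n → ℝ) : 0 ≤ z ⬝ᵥ P *ᵥ z := by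
  have := hP.dotProduct_mulVec_nonneg z
  simpa using this

lemma gwnorm_eq {n : ℕ} {P : Matrix (Fin n) (Fin n) ℝ} (hP : P.PosSemidef) (z : Fin n → ℝ) :
    gwnorm P z = Real.sqrt (z ⬝ᵥ P *ᵥ z) := by
  rw [gwnorm, abs_of_nonneg (posSemidef_dot hP z)]

lemma gwnorm_le_op {n : ℕ} (Q : Matrix (Fin n) (Fin n) ℝ) {c : ℝ} (hc : opnorm Q ≤ c)
    (z : Fin n → ℝ) : gwnorm Q z ≤ Real.sqrt c * eucNorm z := by
  have hc0 : 0 ≤ c := le_trans (opnorm_nonneg Q) hc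
  have h1 : |z ⬝ᵥ Q *ᵥ z| ≤ c * (eucNorm z * eucNorm z) := by
    calc |z ⬝ᵥ Q *ᵥ z| ≤ eucNorm z * eucNorm (Q *ᵥ z) := abs_dot_le _ _
      _ ≤ eucNorm z * (opnorm Q * eucNorm z) :=
          mul_le_mul_of_nonneg_left (eucNorm_mulVec_le Q z) (eucNorm_nonneg z)
      _ ≤ eucNorm z * (c * eucNorm z) := by
          apply mul_le_mul_of_nonneg_left _ (eucNorm_nonneg z)
          exact mul_le_mul_of_nonneg_right hc (eucNorm_nonneg z)
      _ = c * (eucNorm z * eucNorm z) := by ring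
  calc gwnorm Q z ≤ Real.sqrt (c * (eucNorm z * eucNorm z)) := Real.sqrt_le_sqrt h1
    _ = Real.sqrt c * eucNorm z := by
        rw [Real.sqrt_mul hc0, Real.sqrt_mul_self (eucNorm_nonneg z)]

open scoped MatrixOrder in
lemma gwnorm_sqrtmul {n : ℕ} {P : Matrix (Fin n) (Fin n) ℝ} (hP : P.PosSemidef) (z : Fin n → ℝ) :
    gwnorm P z = eucNorm (CFC.sqrt P *ᵥ z) := by
  rw [gwnorm_eq hP, eucNorm]
  congr 1
  have ht : (CFC.sqrt P)ᵀ = CFC.sqrt P := by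
    rw [← Matrix.conjTranspose_eq_transpose_of_trivial]
    exact (Matrix.nonneg_iff_posSemidef.mp (CFC.sqrt_nonneg P)).1
  calc z ⬝ᵥ P *ᵥ z = z ⬝ᵥ (CFC.sqrt P *ᵥ (CFC.sqrt P *ᵥ z)) := by
        rw [Matrix.mulVec_mulVec, CFC.sqrt_mul_sqrt_self P (Matrix.nonneg_iff_posSemidef.mpr hP)]
    _ = (z ᵥ* CFC.sqrt P) ⬝ᵥ (CFC.sqrt P *ᵥ z) := Matrix.dotProduct_mulVec _ _ _
    _ = (CFC.sqrt P *ᵥ z) ⬝ᵥ (CFC.sqrt P *ᵥ z) := by rw [← Matrix.mulVec_transpose, ht]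

lemma gwnorm_add_le {n : ℕ} {P : Matrix (Fin n) (Fin n) ℝ} (hP : P.PosSemidef)
    (a b : Fin n → ℝ) : gwnorm P (a + b) ≤ gwnorm P a + gwnorm P b := by
  rw [gwnorm_sqrtmul hP, gwnorm_sqrtmul hP, gwnorm_sqrtmul hP, Matrix.mulVec_add]
  exact eucNorm_add_le _ _

lemma gwnorm_perturb_le {n : ℕ} {P Q : Matrix (Fin n) (Fin n) ℝ} (hP : P.PosSemidef)
    (z : Fin n → ℝ) : gwnorm (P + Q) z ≤ gwnorm P z + gwnorm Q z := by
  rw [gwnorm, gwnorm_eq hP, gwnorm]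
  have hsplit : z ⬝ᵥ (P + Q) *ᵥ z = z ⬝ᵥ P *ᵥ z + z ⬝ᵥ Q *ᵥ z := by
    rw [Matrix.add_mulVec, dotProduct_add]
  calc Real.sqrt |z ⬝ᵥ (P + Q) *ᵥ z| ≤ Real.sqrt (z ⬝ᵥ P *ᵥ z + |z ⬝ᵥ Q *ᵥ z|) := by
        apply Real.sqrt_le_sqrt
        rw [hsplit]
        calc |z ⬝ᵥ P *ᵥ z + z ⬝ᵥ Q *ᵥ z| ≤ |z ⬝ᵥ P *ᵥ z| + |z ⬝ᵥ Q *ᵥ z| := abs_add_le _ _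
          _ = z ⬝ᵥ P *ᵥ z + |z ⬝ᵥ Q *ᵥ z| := by rw [abs_of_nonneg (posSemidef_dot hP z)]
    _ ≤ _ := my_sqrt_add_le _ _ (posSemidef_dot hP z) (abs_nonneg _)

lemma gwnorm_perturb_ge {n : ℕ} {P Q : Matrix (Fin n) (Fin n) ℝ} (hP : P.PosSemidef)
    (z : Fin n → ℝ) : gwnorm P z ≤ gwnorm (P + Q) z + gwnorm Q z := by
  rw [gwnorm_eq hP, gwnorm, gwnorm]
  have hsplit : z ⬝ᵥ P *ᵥ z = z ⬝ᵥ (P + Q) *ᵥ z - z ⬝ᵥ Q *ᵥ z := by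
    rw [Matrix.add_mulVec, dotProduct_add]; ring
  calc Real.sqrt (z ⬝ᵥ P *ᵥ z) ≤ Real.sqrt (|z ⬝ᵥ (P + Q) *ᵥ z| + |z ⬝ᵥ Q *ᵥ z|) := by
        apply Real.sqrt_le_sqrt
        rw [hsplit]
        calc z ⬝ᵥ (P + Q) *ᵥ z - z ⬝ᵥ Q *ᵥ z ≤ |z ⬝ᵥ (P + Q) *ᵥ z - z ⬝ᵥ Q *ᵥ z| :=
              le_abs_self _
          _ ≤ |z ⬝ᵥ (P + Q) *ᵥ z| + |z ⬝ᵥ Q *ᵥ z| := abs_sub _ _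
    _ ≤ _ := my_sqrt_add_le _ _ (abs_nonneg _) (abs_nonneg _)

lemma gwnorm_le_lamUp {n : ℕ} {P : Matrix (Fin n) (Fin n) ℝ} (hP : P.PosSemidef)
    {lamUp : ℝ} (hmax : (⨆ i, hP.1.eigenvalues i) ≤ lamUp) (hUp : 0 ≤ lamUp)
    (z : Fin n → ℝ) : gwnorm P z ≤ Real.sqrt lamUp * eucNorm z := by
  rw [gwnorm_eq hP, eucNorm, ← Real.sqrt_mul hUp]
  apply Real.sqrt_le_sqrt
  calc z ⬝ᵥ P *ᵥ z ≤ (⨆ i, hP.1.eigenvalues i) * (z ⬝ᵥ z) := (quad_bounds hP.1 z).2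
    _ ≤ lamUp * (z ⬝ᵥ z) := mul_le_mul_of_nonneg_right hmax (dot_self_nonneg z)

lemma gwnorm_ge_lamLow {n : ℕ} {P : Matrix (Fin n) (Fin n) ℝ} (hP : P.PosSemidef)
    {lamLow : ℝ} (hmin : lamLow ≤ ⨅ i, hP.1.eigenvalues i) (hLow : 0 ≤ lamLow)
    (z : Fin n → ℝ) : Real.sqrt lamLow * eucNorm z ≤ gwnorm P z := by
  rw [gwnorm_eq hP, eucNorm, ← Real.sqrt_mul hLow]
  apply Real.sqrt_le_sqrt
  calc lamLow * (z ⬝ᵥ z) ≤ (⨅ i, hP.1.eigenvalues i) * (z ⬝ᵥ z) :=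
        mul_le_mul_of_nonneg_right hmin (dot_self_nonneg z)
    _ ≤ z ⬝ᵥ P *ᵥ z := (quad_bounds hP.1 z).1

end Helpers

/-- core inequality of Theorem 3 (stability of the closed loop
with the trained NN in the loop). Under the linearization-error bound, the
stability constraint, and the one-step optimality consequence, the perturbed
Lyapunov decrement satisfies the stated bound; in particular, if
`θ > √(Δ̄P) + √(Δ̄P)·√(λ_up)/√(λ_low) + (√(λ_up) + √(Δ̄P))·μ_g·Δ̄u`, then the
perturbed Lyapunov function strictly decreases whenever `‖x − x̄‖ > ϑ`. -/
theorem nn_in_the_loop_core_inequality {n p : ℕ}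
    (x xbar : Fin n → ℝ) (u Δu : Fin p → ℝ)
    (Δubar : ℝ) (hΔu : eucNorm Δu ≤ Δubar)
    (f : (Fin n → ℝ) → (Fin n → ℝ)) (g : (Fin n → ℝ) → Matrix (Fin n) (Fin p) ℝ)
    (μg : ℝ) (hLip : ∀ a b : Fin n → ℝ, opnorm (g a - g b) ≤ μg * eucNorm (a - b))
    (A : Matrix (Fin n) (Fin n) ℝ) (δ θ : ℝ) (hδ : 0 ≤ δ) (hθ : 0 < θ)
    (xplus : Fin n → ℝ) (hxplus : xplus = f x + (g x).mulVec (u + Δu))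
    (P₁ P₂ ΔP₁ ΔP₂ : Matrix (Fin n) (Fin n) ℝ)
    (hP₁ : P₁.PosDef) (hP₂ : P₂.PosDef)
    (hΔP₁ : ΔP₁.IsHermitian) (hΔP₂ : ΔP₂.IsHermitian)
    (lamLow lamUp ΔPbar : ℝ) (hlamLow : 0 < lamLow) (hΔPbar : 0 ≤ ΔPbar)
    (hmin₁ : lamLow ≤ ⨅ i, hP₁.1.eigenvalues i)
    (hmin₂ : lamLow ≤ ⨅ i, hP₂.1.eigenvalues i)
    (hmax₁ : (⨆ i, hP₁.1.eigenvalues i) ≤ lamUp)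
    (hmax₂ : (⨆ i, hP₂.1.eigenvalues i) ≤ lamUp)
    (hΔP₁le : opnorm ΔP₁ ≤ ΔPbar) (hΔP₂le : opnorm ΔP₂ ≤ ΔPbar)
    (hlin : eucNorm (f x - A.mulVec x) ≤ δ)
    (hstab : gwnorm P₁ (A.mulVec x + (g x).mulVec u - xbar) - gwnorm P₁ (x - xbar) ≤
      -θ * eucNorm (x - xbar))
    (hopt : gwnorm P₂ (f x + (g x).mulVec u - xbar) ≤
      gwnorm P₁ (f x + (g x).mulVec u - xbar)) :
    gwnorm (P₂ + ΔP₂) (xplus - xbar) - gwnorm (P₁ + ΔP₁) (x - xbar) ≤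
      3 * Real.sqrt lamUp * δ + Real.sqrt ΔPbar * δ +
        (Real.sqrt lamUp + Real.sqrt ΔPbar) * opnorm (g xbar) * Δubar -
        (θ - Real.sqrt ΔPbar - Real.sqrt ΔPbar * Real.sqrt lamUp / Real.sqrt lamLow -
          (Real.sqrt lamUp + Real.sqrt ΔPbar) * μg * Δubar) * eucNorm (x - xbar) ∧
    (θ > Real.sqrt ΔPbar + Real.sqrt ΔPbar * Real.sqrt lamUp / Real.sqrt lamLow +
        (Real.sqrt lamUp + Real.sqrt ΔPbar) * μg * Δubar →
      eucNorm (x - xbar) >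
        (3 * Real.sqrt lamUp * δ + Real.sqrt ΔPbar * δ +
          (Real.sqrt lamUp + Real.sqrt ΔPbar) * opnorm (g xbar) * Δubar) /
        (θ - Real.sqrt ΔPbar - Real.sqrt ΔPbar * Real.sqrt lamUp / Real.sqrt lamLow -
          (Real.sqrt lamUp + Real.sqrt ΔPbar) * μg * Δubar) →
      gwnorm (P₂ + ΔP₂) (xplus - xbar) - gwnorm (P₁ + ΔP₁) (x - xbar) < 0) := by
  rcases isEmpty_or_nonempty (Fin n) with hn | hn
  · exfalso
    have h0 : (⨅ i, hP₁.1.eigenvalues i) = 0 := Real.iInf_of_isEmpty _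
    rw [h0] at hmin₁
    linarith
  -- notation
  have hΔubar : 0 ≤ Δubar := le_trans (eucNorm_nonneg Δu) hΔu
  have hUp0 : 0 ≤ lamUp := by
    obtain ⟨i⟩ := hn
    have h1 : hP₁.1.eigenvalues i ≤ ⨆ j, hP₁.1.eigenvalues j :=
      le_ciSup (Set.Finite.bddAbove (Set.finite_range _)) i
    have h2 : 0 < hP₁.1.eigenvalues i := hP₁.eigenvalues_pos i
    linarith
  have hLow0 : 0 ≤ lamLow := le_of_lt hlamLow
  set sU := Real.sqrt lamUp with hsUdef
  set sL := Real.sqrt lamLow with hsLdef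
  set sB := Real.sqrt ΔPbar with hsBdef
  have hsU : 0 ≤ sU := Real.sqrt_nonneg _
  have hsB : 0 ≤ sB := Real.sqrt_nonneg _
  have hsL : 0 < sL := Real.sqrt_pos.mpr hlamLow
  set e := eucNorm (x - xbar) with hedef
  have he0 : 0 ≤ e := eucNorm_nonneg _
  set Gb := opnorm (g xbar) with hGbdef
  have hGb0 : 0 ≤ Gb := opnorm_nonneg _
  -- vectors
  set v := A.mulVec x + (g x).mulVec u - xbar with hvdef
  set w := f x + (g x).mulVec u - xbar with hwdef
  set d := f x - A.mulVec x with hddef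
  set gu := (g x).mulVec Δu with hgudef
  have hzp : xplus - xbar = (v + d) + gu := by
    rw [hxplus, Matrix.mulVec_add, hvdef, hddef, hgudef]
    abel
  have hwvd : w = v + d := by rw [hvdef, hddef, hwdef]; abel
  -- scalar abbreviations
  set Ev := eucNorm v with hEvdef
  set Ed := eucNorm d with hEddef
  set Eg := eucNorm gu with hEgdef
  have hEv0 : 0 ≤ Ev := eucNorm_nonneg _
  have hEg0 : 0 ≤ Eg := eucNorm_nonneg _
  have hEd : Ed ≤ δ := hlin
  -- step bounds
  have A1 : gwnorm (P₂ + ΔP₂) (xplus - xbar) ≤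
      gwnorm P₂ (xplus - xbar) + sB * eucNorm (xplus - xbar) :=
    le_trans (gwnorm_perturb_le hP₂.posSemidef _)
      (by
        have := gwnorm_le_op ΔP₂ hΔP₂le (xplus - xbar)
        linarith)
  have A2 : gwnorm P₂ (xplus - xbar) ≤ gwnorm P₂ w + sU * Eg := by
    have h1 : gwnorm P₂ (xplus - xbar) ≤ gwnorm P₂ w + gwnorm P₂ gu := by
      rw [hzp, ← hwvd]
      exact gwnorm_add_le hP₂.posSemidef w gu
    have h2 : gwnorm P₂ gu ≤ sU * Eg := gwnorm_le_lamUp hP₂.posSemidef hmax₂ hUp0 gu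
    linarith
  have A3 : gwnorm P₂ w ≤ gwnorm P₁ w := hopt
  have A4 : gwnorm P₁ w ≤ gwnorm P₁ v + sU * δ := by
    have h1 : gwnorm P₁ w ≤ gwnorm P₁ v + gwnorm P₁ d := by
      rw [hwvd]
      exact gwnorm_add_le hP₁.posSemidef v d
    have h2 : gwnorm P₁ d ≤ sU * Ed := gwnorm_le_lamUp hP₁.posSemidef hmax₁ hUp0 d
    have h3 : sU * Ed ≤ sU * δ := mul_le_mul_of_nonneg_left hEd hsU
    linarith
  have A5 : gwnorm P₁ v ≤ gwnorm P₁ (x - xbar) - θ * e := by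
    have := hstab
    linarith
  have hGP1E : gwnorm P₁ (x - xbar) ≤ sU * e :=
    gwnorm_le_lamUp hP₁.posSemidef hmax₁ hUp0 (x - xbar)
  have hEvB : Ev ≤ sU * e / sL := by
    rw [le_div_iff₀ hsL]
    have h1 : sL * Ev ≤ gwnorm P₁ v := gwnorm_ge_lamLow hP₁.posSemidef hmin₁ hLow0 v
    have h2 : gwnorm P₁ v ≤ sU * e := by
      have hθe : 0 ≤ θ * e := mul_nonneg (le_of_lt hθ) he0
      linarith
    linarith
  have A6 : eucNorm (xplus - xbar) ≤ Ev + Ed + Eg := by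
    rw [hzp]
    have h1 : eucNorm ((v + d) + gu) ≤ eucNorm (v + d) + eucNorm gu := eucNorm_add_le _ _
    have h2 : eucNorm (v + d) ≤ Ev + Ed := eucNorm_add_le _ _
    linarith
  have A9 : Eg ≤ (Gb + μg * e) * Δubar := by
    have hgx : opnorm (g x) ≤ Gb + μg * e := by
      have hco : g x = g xbar + (g x - g xbar) := by abel
      have h1 : opnorm (g x) ≤ Gb + opnorm (g x - g xbar) := by
        conv_lhs => rw [hco]
        exact opnorm_add_le _ _
      have h2 : opnorm (g x - g xbar) ≤ μg * e := hLip x xbar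
      linarith
    calc Eg ≤ opnorm (g x) * eucNorm Δu := eucNorm_mulVec_le _ _
      _ ≤ opnorm (g x) * Δubar := mul_le_mul_of_nonneg_left hΔu (opnorm_nonneg _)
      _ ≤ (Gb + μg * e) * Δubar := mul_le_mul_of_nonneg_right hgx hΔubar
  have A10 : gwnorm P₁ (x - xbar) - sB * e ≤ gwnorm (P₁ + ΔP₁) (x - xbar) := by
    have h1 : gwnorm P₁ (x - xbar) ≤ gwnorm (P₁ + ΔP₁) (x - xbar) + gwnorm ΔP₁ (x - xbar) :=
      gwnorm_perturb_ge hP₁.posSemidef _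
    have h2 : gwnorm ΔP₁ (x - xbar) ≤ sB * e := gwnorm_le_op ΔP₁ hΔP₁le (x - xbar)
    linarith
  -- products
  have hp1 : sB * eucNorm (xplus - xbar) ≤ sB * sU * e / sL + sB * δ + sB * Eg := by
    calc sB * eucNorm (xplus - xbar) ≤ sB * (sU * e / sL + δ + Eg) := by
          apply mul_le_mul_of_nonneg_left _ hsB
          linarith
      _ = sB * sU * e / sL + sB * δ + sB * Eg := by ring
  have hp2 : sU * Eg + sB * Eg ≤ (sU + sB) * Gb * Δubar + (sU + sB) * μg * Δubar * e := by
    calc sU * Eg + sB * Eg = (sU + sB) * Eg := by ring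
      _ ≤ (sU + sB) * ((Gb + μg * e) * Δubar) :=
          mul_le_mul_of_nonneg_left A9 (by positivity)
      _ = (sU + sB) * Gb * Δubar + (sU + sB) * μg * Δubar * e := by ring
  have hsUδ : 0 ≤ sU * δ := mul_nonneg hsU hδ
  have key : gwnorm (P₂ + ΔP₂) (xplus - xbar) - gwnorm (P₁ + ΔP₁) (x - xbar) ≤
      3 * sU * δ + sB * δ + (sU + sB) * Gb * Δubar -
        (θ - sB - sB * sU / sL - (sU + sB) * μg * Δubar) * e := by
    have hexp : (θ - sB - sB * sU / sL - (sU + sB) * μg * Δubar) * e =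
        θ * e - sB * e - sB * sU * e / sL - (sU + sB) * μg * Δubar * e := by ring
    rw [hexp]
    linarith
  refine ⟨key, ?_⟩
  intro hθ2 he
  set S := sB + sB * sU / sL + (sU + sB) * μg * Δubar with hSdef
  have hpos : 0 < θ - sB - sB * sU / sL - (sU + sB) * μg * Δubar := by
    rw [hSdef] at hθ2
    linarith
  have hC : (3 * sU * δ + sB * δ + (sU + sB) * Gb * Δubar) <
      (θ - sB - sB * sU / sL - (sU + sB) * μg * Δubar) * e := by
    rw [gt_iff_lt, div_lt_iff₀ hpos] at he
    linarith
  linarith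
end
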